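/- A polyomino on the square lattice is convex (i.e., both row-convex and column-convex) if and only if its perimeter equals the perimeter of its circumscribed rectangle. -/

import Mathlib

/-- Two unit lattice cells (indexed by their lower-left corners) share an edge. -/
def CellAdj (a b : ℤ × ℤ) : Prop :=
  (a.1 = b.1 ∧ (a.2 - b.2).natAbs = 1) ∨ (a.2 = b.2 ∧ (a.1 - b.1).natAbs = 1)

instance : ∀ a b : ℤ × ℤ, Decidable (CellAdj a b) := fun a b => by
  unfold CellAdj; infer_instance

/-- A polyomino: a nonempty finite edge-connected set of unit lattice cells. -/
def IsPolyomino (S : Finset (ℤ × ℤ)) : Prop :=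
  S.Nonempty ∧ ∀ a ∈ S, ∀ b ∈ S,
    Relation.ReflTransGen (fun x y => x ∈ S ∧ y ∈ S ∧ CellAdj x y) a b

/-- Row-convexity: the cells in every row form a contiguous segment. -/
def RowConvex (S : Finset (ℤ × ℤ)) : Prop :=
  ∀ x₁ x₂ x₃ y : ℤ, x₁ ≤ x₂ → x₂ ≤ x₃ → (x₁, y) ∈ S → (x₃, y) ∈ S → (x₂, y) ∈ S

/-- Column-convexity: the cells in every column form a contiguous segment. -/
def ColConvex (S : Finset (ℤ × ℤ)) : Prop :=
  ∀ x y₁ y₂ y₃ : ℤ, y₁ ≤ y₂ → y₂ ≤ y₃ → (x, y₁) ∈ S → (x, y₃) ∈ S → (x, y₂) ∈ S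

/-- The perimeter (boundary length) of a set of cells: each cell contributes its
four sides, minus the shared (interior) sides, each of which is counted twice
among ordered adjacent pairs. -/
def polyPerimeter (S : Finset (ℤ × ℤ)) : ℕ :=
  4 * S.card - ((S ×ˢ S).filter (fun p => CellAdj p.1 p.2)).card

-- auxiliary
lemma cellAdj_iff (a b : ℤ × ℤ) : CellAdj a b ↔
    b = (a.1, a.2 + 1) ∨ b = (a.1, a.2 - 1) ∨ b = (a.1 + 1, a.2) ∨ b = (a.1 - 1, a.2) := by
  obtain ⟨a1, a2⟩ := a; obtain ⟨b1, b2⟩ := b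
  simp only [CellAdj, Prod.mk.injEq]
  omega

lemma card_pair_filter (S : Finset (ℤ × ℤ)) (f : ℤ × ℤ → ℤ × ℤ) :
    ((S ×ˢ S).filter (fun p => p.2 = f p.1)).card
      = (S.filter (fun a => f a ∈ S)).card := by
  apply Finset.card_bij' (fun p _ => p.1) (fun a _ => (a, f a))
  · intro p hp
    simp only [Finset.mem_filter, Finset.mem_product] at hp ⊢
    exact ⟨hp.1.1, hp.2 ▸ hp.1.2⟩
  · intro a ha
    simp only [Finset.mem_filter, Finset.mem_product] at ha ⊢
    exact ⟨⟨ha.1, ha.2⟩, trivial⟩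
  · intro p hp
    simp only [Finset.mem_filter] at hp
    exact Prod.ext rfl hp.2.symm
  · intro a ha; rfl

lemma card_shift (S : Finset (ℤ × ℤ)) :
    (S.filter fun a => (a.1 - 1, a.2) ∈ S).card
      = (S.filter fun a => (a.1 + 1, a.2) ∈ S).card := by
  refine Finset.card_bij' (fun a _ => (a.1 - 1, a.2)) (fun a _ => (a.1 + 1, a.2)) ?_ ?_ ?_ ?_
  case refine_3 => intro a _; simp
  case refine_4 => intro a _; simp
  · intro a ha
    simp only [Finset.mem_filter] at ha ⊢
    refine ⟨ha.2, ?_⟩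
    have : (a.1 - 1 + 1, a.2) = a := by simp
    rw [this]; exact ha.1
  · intro a ha
    simp only [Finset.mem_filter] at ha ⊢
    refine ⟨ha.2, ?_⟩
    have : (a.1 + 1 - 1, a.2) = a := by simp
    rw [this]; exact ha.1

lemma card_shift' (S : Finset (ℤ × ℤ)) :
    (S.filter fun a => (a.1, a.2 - 1) ∈ S).card
      = (S.filter fun a => (a.1, a.2 + 1) ∈ S).card := by
  refine Finset.card_bij' (fun a _ => (a.1, a.2 - 1)) (fun a _ => (a.1, a.2 + 1)) ?_ ?_ ?_ ?_
  case refine_3 => intro a _; simp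
  case refine_4 => intro a _; simp
  · intro a ha
    simp only [Finset.mem_filter] at ha ⊢
    refine ⟨ha.2, ?_⟩
    have : (a.1, a.2 - 1 + 1) = a := by simp
    rw [this]; exact ha.1
  · intro a ha
    simp only [Finset.mem_filter] at ha ⊢
    refine ⟨ha.2, ?_⟩
    have : (a.1, a.2 + 1 - 1) = a := by simp
    rw [this]; exact ha.1

lemma polyPerimeter_eq (S : Finset (ℤ × ℤ)) :
    polyPerimeter S = 2 * (S.filter fun c => (c.1 + 1, c.2) ∉ S).card
      + 2 * (S.filter fun c => (c.1, c.2 + 1) ∉ S).card := by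
  have hd1 : Disjoint ((S ×ˢ S).filter (fun p => p.2 = (p.1.1, p.1.2 + 1)))
      (((S ×ˢ S).filter (fun p => p.2 = (p.1.1, p.1.2 - 1)))
        ∪ (((S ×ˢ S).filter (fun p => p.2 = (p.1.1 + 1, p.1.2)))
          ∪ ((S ×ˢ S).filter (fun p => p.2 = (p.1.1 - 1, p.1.2))))) := by
    simp only [Finset.disjoint_left, Finset.mem_filter, Finset.mem_union]
    rintro ⟨⟨a1, a2⟩, ⟨b1, b2⟩⟩ ⟨_, h1⟩ (⟨_, h2⟩ | ⟨_, h2⟩ | ⟨_, h2⟩) <;>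
      simp only [Prod.mk.injEq] at h1 h2 <;> omega
  have hd2 : Disjoint ((S ×ˢ S).filter (fun p => p.2 = (p.1.1, p.1.2 - 1)))
      (((S ×ˢ S).filter (fun p => p.2 = (p.1.1 + 1, p.1.2)))
        ∪ ((S ×ˢ S).filter (fun p => p.2 = (p.1.1 - 1, p.1.2)))) := by
    simp only [Finset.disjoint_left, Finset.mem_filter, Finset.mem_union]
    rintro ⟨⟨a1, a2⟩, ⟨b1, b2⟩⟩ ⟨_, h1⟩ (⟨_, h2⟩ | ⟨_, h2⟩) <;>
      simp only [Prod.mk.injEq] at h1 h2 <;> omega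
  have hd3 : Disjoint ((S ×ˢ S).filter (fun p => p.2 = (p.1.1 + 1, p.1.2)))
      ((S ×ˢ S).filter (fun p => p.2 = (p.1.1 - 1, p.1.2))) := by
    simp only [Finset.disjoint_left, Finset.mem_filter]
    rintro ⟨⟨a1, a2⟩, ⟨b1, b2⟩⟩ ⟨_, h1⟩ ⟨_, h2⟩
    simp only [Prod.mk.injEq] at h1 h2; omega
  have hsplit : ((S ×ˢ S).filter (fun p => CellAdj p.1 p.2)).card
      = ((S ×ˢ S).filter (fun p => p.2 = (p.1.1, p.1.2 + 1))).card
      + ((S ×ˢ S).filter (fun p => p.2 = (p.1.1, p.1.2 - 1))).card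
      + ((S ×ˢ S).filter (fun p => p.2 = (p.1.1 + 1, p.1.2))).card
      + ((S ×ˢ S).filter (fun p => p.2 = (p.1.1 - 1, p.1.2))).card := by
    have : (S ×ˢ S).filter (fun p => CellAdj p.1 p.2)
        = (S ×ˢ S).filter (fun p => p.2 = (p.1.1, p.1.2 + 1) ∨ (p.2 = (p.1.1, p.1.2 - 1)
          ∨ (p.2 = (p.1.1 + 1, p.1.2) ∨ p.2 = (p.1.1 - 1, p.1.2)))) :=
      Finset.filter_congr (fun p _ => by exact (cellAdj_iff p.1 p.2).trans (by tauto))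
    rw [this, Finset.filter_or, Finset.filter_or, Finset.filter_or,
        Finset.card_union_of_disjoint hd1, Finset.card_union_of_disjoint hd2,
        Finset.card_union_of_disjoint hd3]
    omega
  have e1 := card_pair_filter S (fun a => (a.1, a.2 + 1))
  have e2 := card_pair_filter S (fun a => (a.1, a.2 - 1))
  have e3 := card_pair_filter S (fun a => (a.1 + 1, a.2))
  have e4 := card_pair_filter S (fun a => (a.1 - 1, a.2))
  have s1 := card_shift S
  have s2 := card_shift' S
  have f1 := Finset.card_filter_add_card_filter_not
    (s := S) (p := fun c => (c.1 + 1, c.2) ∈ S)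
  have f2 := Finset.card_filter_add_card_filter_not
    (s := S) (p := fun c => (c.1, c.2 + 1) ∈ S)
  unfold polyPerimeter
  omega

lemma path_snd {S : Finset (ℤ × ℤ)} {a b : ℤ × ℤ} (ha : a ∈ S)
    (h : Relation.ReflTransGen (fun x y => x ∈ S ∧ y ∈ S ∧ CellAdj x y) a b)
    {y : ℤ} (h1 : a.2 ≤ y) : y ≤ b.2 → ∃ c ∈ S, c.2 = y := by
  induction h with
  | refl => exact fun h2 => ⟨a, ha, le_antisymm h1 h2⟩
  | @tail b' c hpath hstep ih =>
    intro h2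
    by_cases hy : y ≤ b'.2
    · exact ih hy
    · obtain ⟨hb', hc, hadj⟩ := hstep
      refine ⟨c, hc, ?_⟩
      rcases hadj with ⟨_, hn⟩ | ⟨he, _⟩ <;> omega

lemma path_fst {S : Finset (ℤ × ℤ)} {a b : ℤ × ℤ} (ha : a ∈ S)
    (h : Relation.ReflTransGen (fun x y => x ∈ S ∧ y ∈ S ∧ CellAdj x y) a b)
    {x : ℤ} (h1 : a.1 ≤ x) : x ≤ b.1 → ∃ c ∈ S, c.1 = x := by
  induction h with
  | refl => exact fun h2 => ⟨a, ha, le_antisymm h1 h2⟩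
  | @tail b' c hpath hstep ih =>
    intro h2
    by_cases hx : x ≤ b'.1
    · exact ih hx
    · obtain ⟨hb', hc, hadj⟩ := hstep
      refine ⟨c, hc, ?_⟩
      rcases hadj with ⟨he, _⟩ | ⟨_, hn⟩ <;> omega

lemma image_snd_eq (S : Finset (ℤ × ℤ)) (hS : IsPolyomino S) (hne : S.Nonempty) :
    S.image Prod.snd = Finset.Icc (S.inf' hne Prod.snd) (S.sup' hne Prod.snd) := by
  ext y
  simp only [Finset.mem_image, Finset.mem_Icc]
  constructor
  · rintro ⟨c, hc, rfl⟩
    exact ⟨Finset.inf'_le _ hc, Finset.le_sup' _ hc⟩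
  · rintro ⟨h1, h2⟩
    obtain ⟨a, ha, hae⟩ := Finset.exists_mem_eq_inf' hne Prod.snd
    obtain ⟨b, hb, hbe⟩ := Finset.exists_mem_eq_sup' hne Prod.snd
    exact path_snd ha (hS.2 a ha b hb) (hae ▸ h1) (hbe ▸ h2)

lemma image_fst_eq (S : Finset (ℤ × ℤ)) (hS : IsPolyomino S) (hne : S.Nonempty) :
    S.image Prod.fst = Finset.Icc (S.inf' hne Prod.fst) (S.sup' hne Prod.fst) := by
  ext x
  simp only [Finset.mem_image, Finset.mem_Icc]
  constructor
  · rintro ⟨c, hc, rfl⟩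
    exact ⟨Finset.inf'_le _ hc, Finset.le_sup' _ hc⟩
  · rintro ⟨h1, h2⟩
    obtain ⟨a, ha, hae⟩ := Finset.exists_mem_eq_inf' hne Prod.fst
    obtain ⟨b, hb, hbe⟩ := Finset.exists_mem_eq_sup' hne Prod.fst
    exact path_fst ha (hS.2 a ha b hb) (hae ▸ h1) (hbe ▸ h2)

lemma image_Rt (S : Finset (ℤ × ℤ)) :
    (S.filter fun c => (c.1 + 1, c.2) ∉ S).image Prod.snd = S.image Prod.snd := by
  apply Finset.Subset.antisymm
  · exact Finset.image_subset_image (Finset.filter_subset _ _)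
  · intro y hy
    simp only [Finset.mem_image] at hy ⊢
    obtain ⟨c, hc, rfl⟩ := hy
    obtain ⟨m, hm, hmax⟩ := Finset.exists_max_image
      (S.filter fun d => d.2 = c.2) Prod.fst ⟨c, Finset.mem_filter.2 ⟨hc, rfl⟩⟩
    simp only [Finset.mem_filter] at hm
    refine ⟨m, Finset.mem_filter.2 ⟨hm.1, fun hmem => ?_⟩, hm.2⟩
    have h2 : ((m.1 + 1, m.2) : ℤ × ℤ) ∈ S.filter fun d => d.2 = c.2 :=
      Finset.mem_filter.2 ⟨hmem, hm.2⟩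
    have := hmax _ h2
    simp at this

lemma image_Tp (S : Finset (ℤ × ℤ)) :
    (S.filter fun c => (c.1, c.2 + 1) ∉ S).image Prod.fst = S.image Prod.fst := by
  apply Finset.Subset.antisymm
  · exact Finset.image_subset_image (Finset.filter_subset _ _)
  · intro x hx
    simp only [Finset.mem_image] at hx ⊢
    obtain ⟨c, hc, rfl⟩ := hx
    obtain ⟨m, hm, hmax⟩ := Finset.exists_max_image
      (S.filter fun d => d.1 = c.1) Prod.snd ⟨c, Finset.mem_filter.2 ⟨hc, rfl⟩⟩
    simp only [Finset.mem_filter] at hm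
    refine ⟨m, Finset.mem_filter.2 ⟨hm.1, fun hmem => ?_⟩, hm.2⟩
    have h2 : ((m.1, m.2 + 1) : ℤ × ℤ) ∈ S.filter fun d => d.1 = c.1 :=
      Finset.mem_filter.2 ⟨hmem, hm.2⟩
    have := hmax _ h2
    simp at this

lemma rowConvex_injOn (S : Finset (ℤ × ℤ)) (h : RowConvex S) :
    Set.InjOn Prod.snd ((S.filter fun c => (c.1 + 1, c.2) ∉ S) : Set (ℤ × ℤ)) := by
  intro c hc d hd hcd
  simp only [Finset.coe_filter, Set.mem_setOf_eq] at hc hd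
  have hcS : (c.1, c.2) ∈ S := by rw [Prod.mk.eta]; exact hc.1
  have hdS : (d.1, c.2) ∈ S := by rw [show c.2 = d.2 from hcd, Prod.mk.eta]; exact hd.1
  rcases lt_trichotomy c.1 d.1 with hlt | heq | hgt
  · exact absurd (h c.1 (c.1 + 1) d.1 c.2 (by omega) (by omega) hcS hdS) hc.2
  · exact Prod.ext heq hcd
  · have hdS' : (d.1, d.2) ∈ S := by rw [Prod.mk.eta]; exact hd.1
    have hcS' : (c.1, d.2) ∈ S := by rw [← show c.2 = d.2 from hcd, Prod.mk.eta]; exact hc.1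
    exact absurd (h d.1 (d.1 + 1) c.1 d.2 (by omega) (by omega) hdS' hcS') hd.2

lemma colConvex_injOn (S : Finset (ℤ × ℤ)) (h : ColConvex S) :
    Set.InjOn Prod.fst ((S.filter fun c => (c.1, c.2 + 1) ∉ S) : Set (ℤ × ℤ)) := by
  intro c hc d hd hcd
  simp only [Finset.coe_filter, Set.mem_setOf_eq] at hc hd
  have hcS : (c.1, c.2) ∈ S := by rw [Prod.mk.eta]; exact hc.1
  have hdS : (c.1, d.2) ∈ S := by rw [show c.1 = d.1 from hcd, Prod.mk.eta]; exact hd.1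
  rcases lt_trichotomy c.2 d.2 with hlt | heq | hgt
  · exact absurd (h c.1 c.2 (c.2 + 1) d.2 (by omega) (by omega) hcS hdS) hc.2
  · exact Prod.ext hcd heq
  · have hdS' : (d.1, d.2) ∈ S := by rw [Prod.mk.eta]; exact hd.1
    have hcS' : (d.1, c.2) ∈ S := by rw [← show c.1 = d.1 from hcd, Prod.mk.eta]; exact hc.1
    exact absurd (h d.1 d.2 (d.2 + 1) c.2 (by omega) (by omega) hdS' hcS') hd.2

lemma not_rowConvex_not_injOn (S : Finset (ℤ × ℤ)) (h : ¬ RowConvex S) :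
    ¬ Set.InjOn Prod.snd ((S.filter fun c => (c.1 + 1, c.2) ∉ S) : Set (ℤ × ℤ)) := by
  simp only [RowConvex, not_forall] at h
  obtain ⟨x₁, x₂, x₃, y, hx12, hx23, h1, h3, h2⟩ := h
  have hlt1 : x₁ < x₂ := lt_of_le_of_ne hx12 (by rintro rfl; exact h2 h1)
  have hlt2 : x₂ < x₃ := lt_of_le_of_ne hx23 (by rintro rfl; exact h2 h3)
  obtain ⟨m, hm, hmax⟩ := Finset.exists_max_image
    (S.filter fun c => c.2 = y ∧ c.1 < x₂) Prod.fst
    ⟨(x₁, y), Finset.mem_filter.2 ⟨h1, rfl, hlt1⟩⟩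
  simp only [Finset.mem_filter] at hm
  obtain ⟨hmS, hmy, hmx⟩ := hm
  have hmR : m ∈ S.filter fun c => (c.1 + 1, c.2) ∉ S := by
    refine Finset.mem_filter.2 ⟨hmS, fun hmem => ?_⟩
    rcases eq_or_lt_of_le (show m.1 + 1 ≤ x₂ by omega) with heq | hlt
    · apply h2
      have : ((m.1 + 1, m.2) : ℤ × ℤ) = (x₂, y) := by rw [heq, hmy]
      rwa [this] at hmem
    · have := hmax (m.1 + 1, m.2) (Finset.mem_filter.2 ⟨hmem, hmy, hlt⟩)
      simp at this
  obtain ⟨M, hM, hMax⟩ := Finset.exists_max_image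
    (S.filter fun c => c.2 = y) Prod.fst ⟨(x₃, y), Finset.mem_filter.2 ⟨h3, rfl⟩⟩
  simp only [Finset.mem_filter] at hM
  obtain ⟨hMS, hMy⟩ := hM
  have hMR : M ∈ S.filter fun c => (c.1 + 1, c.2) ∉ S := by
    refine Finset.mem_filter.2 ⟨hMS, fun hmem => ?_⟩
    have := hMax (M.1 + 1, M.2) (Finset.mem_filter.2 ⟨hmem, hMy⟩)
    simp at this
  have hMx : x₃ ≤ M.1 := hMax (x₃, y) (Finset.mem_filter.2 ⟨h3, rfl⟩)
  intro hinj
  have := hinj (Finset.mem_coe.2 hmR) (Finset.mem_coe.2 hMR)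
    (show m.2 = M.2 by rw [hmy, hMy])
  rw [this] at hmx
  omega

lemma not_colConvex_not_injOn (S : Finset (ℤ × ℤ)) (h : ¬ ColConvex S) :
    ¬ Set.InjOn Prod.fst ((S.filter fun c => (c.1, c.2 + 1) ∉ S) : Set (ℤ × ℤ)) := by
  simp only [ColConvex, not_forall] at h
  obtain ⟨x, y₁, y₂, y₃, hy12, hy23, h1, h3, h2⟩ := h
  have hlt1 : y₁ < y₂ := lt_of_le_of_ne hy12 (by rintro rfl; exact h2 h1)
  have hlt2 : y₂ < y₃ := lt_of_le_of_ne hy23 (by rintro rfl; exact h2 h3)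
  obtain ⟨m, hm, hmax⟩ := Finset.exists_max_image
    (S.filter fun c => c.1 = x ∧ c.2 < y₂) Prod.snd
    ⟨(x, y₁), Finset.mem_filter.2 ⟨h1, rfl, hlt1⟩⟩
  simp only [Finset.mem_filter] at hm
  obtain ⟨hmS, hmx, hmy⟩ := hm
  have hmR : m ∈ S.filter fun c => (c.1, c.2 + 1) ∉ S := by
    refine Finset.mem_filter.2 ⟨hmS, fun hmem => ?_⟩
    rcases eq_or_lt_of_le (show m.2 + 1 ≤ y₂ by omega) with heq | hlt
    · apply h2
      have : ((m.1, m.2 + 1) : ℤ × ℤ) = (x, y₂) := by rw [heq, hmx]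
      rwa [this] at hmem
    · have := hmax (m.1, m.2 + 1) (Finset.mem_filter.2 ⟨hmem, hmx, hlt⟩)
      simp at this
  obtain ⟨M, hM, hMax⟩ := Finset.exists_max_image
    (S.filter fun c => c.1 = x) Prod.snd ⟨(x, y₃), Finset.mem_filter.2 ⟨h3, rfl⟩⟩
  simp only [Finset.mem_filter] at hM
  obtain ⟨hMS, hMx⟩ := hM
  have hMR : M ∈ S.filter fun c => (c.1, c.2 + 1) ∉ S := by
    refine Finset.mem_filter.2 ⟨hMS, fun hmem => ?_⟩
    have := hMax (M.1, M.2 + 1) (Finset.mem_filter.2 ⟨hmem, hMx⟩)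
    simp at this
  have hMy : y₃ ≤ M.2 := hMax (x, y₃) (Finset.mem_filter.2 ⟨h3, rfl⟩)
  intro hinj
  have := hinj (Finset.mem_coe.2 hmR) (Finset.mem_coe.2 hMR)
    (show m.1 = M.1 by rw [hmx, hMx])
  rw [this] at hmy
  omega


/-- A polyomino is convex (row- and column-convex) iff its perimeter equals the
perimeter `2(w + h)` of its circumscribed (bounding) rectangle. -/
theorem polyomino_convex_iff_perimeter_eq_bounding_rect (S : Finset (ℤ × ℤ))
    (hS : IsPolyomino S) (hne : S.Nonempty) :
    (RowConvex S ∧ ColConvex S) ↔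
      (polyPerimeter S : ℤ) =
        2 * ((S.sup' hne Prod.fst - S.inf' hne Prod.fst + 1) +
             (S.sup' hne Prod.snd - S.inf' hne Prod.snd + 1)) := by
  have hperim := polyPerimeter_eq S
  set r := (S.filter fun c => (c.1 + 1, c.2) ∉ S).card with hr
  set t := (S.filter fun c => (c.1, c.2 + 1) ∉ S).card with ht
  obtain ⟨a, ha⟩ := id hne
  have hfx : S.inf' hne Prod.fst ≤ S.sup' hne Prod.fst :=
    le_trans (Finset.inf'_le _ ha) (Finset.le_sup' _ ha)
  have hfy : S.inf' hne Prod.snd ≤ S.sup' hne Prod.snd :=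
    le_trans (Finset.inf'_le _ ha) (Finset.le_sup' _ ha)
  have hh : ((S.image Prod.snd).card : ℤ) = S.sup' hne Prod.snd - S.inf' hne Prod.snd + 1 := by
    rw [image_snd_eq S hS hne, Int.card_Icc, Int.toNat_of_nonneg (by omega)]
    ring
  have hw : ((S.image Prod.fst).card : ℤ) = S.sup' hne Prod.fst - S.inf' hne Prod.fst + 1 := by
    rw [image_fst_eq S hS hne, Int.card_Icc, Int.toNat_of_nonneg (by omega)]
    ring
  have hleR : (S.image Prod.snd).card ≤ r := by
    rw [← image_Rt]; exact Finset.card_image_le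
  have hleC : (S.image Prod.fst).card ≤ t := by
    rw [← image_Tp]; exact Finset.card_image_le
  have hiffR : RowConvex S ↔ r = (S.image Prod.snd).card := by
    rw [← image_Rt, eq_comm, Finset.card_image_iff]
    exact ⟨rowConvex_injOn S, fun hinj => by
      by_contra hrc; exact not_rowConvex_not_injOn S hrc hinj⟩
  have hiffC : ColConvex S ↔ t = (S.image Prod.fst).card := by
    rw [← image_Tp, eq_comm, Finset.card_image_iff]
    exact ⟨colConvex_injOn S, fun hinj => by
      by_contra hrc; exact not_colConvex_not_injOn S hrc hinj⟩
  rw [hperim, hiffR, hiffC, ← hw, ← hh]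
  constructor
  · rintro ⟨e1, e2⟩
    rw [e1, e2]
    push_cast
    ring
  · intro hval
    push_cast at hval
    omega
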